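/- Let K be the reference tetrahedron in ℝ³ and let p ≥ 1 be an integer. Let V = {Φ ∈ (P_p)³ : Φ·n = 0 on ∂K} and Q = {w ∈ P_{p−1} : ∫_K w dx = 0}. For every B ∈ (P_p)³ there exists a unique pair (Φ, v) ∈ V × Q satisfying the mixed system: ∫_K w · div Φ dx + ∫_K w · div B dx = 0 for all w ∈ Q, and ∫_K Φ·Ψ dx + ∫_K v · div Ψ dx = 0 for all Ψ ∈ V. -/

import Mathlib

open MeasureTheory MvPolynomial Real

noncomputable section

/-- Vertices of the reference tetrahedron: v0=(0,0,0), v1=(1,0,0), v2=(0,1,0), v3=(0,0,1). -/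
def vtx : Fin 4 → Fin 3 → ℝ :=
  ![![0,0,0], ![1,0,0], ![0,1,0], ![0,0,1]]

/-- Barycentric coordinates λ₀ = 1-x-y-z, λ₁ = x, λ₂ = y, λ₃ = z. -/
def lam : Fin 4 → (Fin 3 → ℝ) → ℝ :=
  ![fun x => 1 - x 0 - x 1 - x 2, fun x => x 0, fun x => x 1, fun x => x 2]

/-- The reference tetrahedron K = {x : λ_j(x) ≥ 0 for all j}. -/
def Ktet : Set (Fin 3 → ℝ) := {x | ∀ j : Fin 4, 0 ≤ lam j x}

/-- Face F_j = {x ∈ K : λ_j(x) = 0}. -/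
def faceK (j : Fin 4) : Set (Fin 3 → ℝ) := {x ∈ Ktet | lam j x = 0}

/-- Outward unit normals of the four faces of K. -/
def normalK : Fin 4 → Fin 3 → ℝ :=
  ![fun _ => 1 / Real.sqrt 3, ![-1,0,0], ![0,-1,0], ![0,0,-1]]

/-- (Constant) gradients of the barycentric coordinates. -/
def gradLam : Fin 4 → Fin 3 → ℝ :=
  ![![-1,-1,-1], ![1,0,0], ![0,1,0], ![0,0,1]]

/-- Divergence of a vector polynomial. -/
def divP (Φ : Fin 3 → MvPolynomial (Fin 3) ℝ) : MvPolynomial (Fin 3) ℝ :=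
  ∑ i, MvPolynomial.pderiv i (Φ i)

/-- The normal component of the vector polynomial Φ vanishes on every face of K. -/
def normalVanish (Φ : Fin 3 → MvPolynomial (Fin 3) ℝ) : Prop :=
  ∀ j : Fin 4, ∀ q ∈ faceK j, ∑ i, MvPolynomial.eval q (Φ i) * normalK j i = 0

/-- Divergence of a vector field (as a function). -/
def divF (Φ : (Fin 3 → ℝ) → (Fin 3 → ℝ)) (x : Fin 3 → ℝ) : ℝ :=
  ∑ i, fderiv ℝ Φ x (Pi.single i 1) i

/-- The normal component of the vector field Φ vanishes on every face of K. -/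
def normalVanishF (Φ : (Fin 3 → ℝ) → (Fin 3 → ℝ)) : Prop :=
  ∀ j : Fin 4, ∀ q ∈ faceK j, ∑ i, Φ q i * normalK j i = 0


abbrev Mv3 := MvPolynomial (Fin 3) ℝ

def L0p : Mv3 := 1 - X 0 - X 1 - X 2

lemma eval_L0p (x : Fin 3 → ℝ) : eval x L0p = 1 - x 0 - x 1 - x 2 := by
  simp [L0p]

lemma mem_Ktet {x : Fin 3 → ℝ} :
    x ∈ Ktet ↔ (0 ≤ x 0 ∧ 0 ≤ x 1 ∧ 0 ≤ x 2 ∧ x 0 + x 1 + x 2 ≤ 1) := by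
  constructor
  · intro h
    have h0 := h 0; have h1 := h 1; have h2 := h 2; have h3 := h 3
    simp [lam] at h0 h1 h2 h3
    exact ⟨h1, h2, h3, by linarith⟩
  · rintro ⟨h1, h2, h3, h0⟩ j
    fin_cases j <;> simp [lam] <;> linarith

lemma continuous_evalP (P : Mv3) : Continuous fun x : Fin 3 → ℝ => eval x P := by
  induction P using MvPolynomial.induction_on with
  | C a => simpa using continuous_const
  | add p q hp hq => simp only [map_add]; exact hp.add hq
  | mul_X p j hp => simp only [map_mul, eval_X]; exact hp.mul (continuous_apply j)

lemma isClosed_Ktet : IsClosed Ktet := by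
  have : Ktet = ⋂ j : Fin 4, {x | 0 ≤ lam j x} := by
    ext x; simp [Ktet, Set.mem_iInter]
  rw [this]
  refine isClosed_iInter fun j => ?_
  have hc : Continuous (lam j) := by
    fin_cases j <;> simp [lam] <;> fun_prop
  exact isClosed_le continuous_const hc

lemma measurableSet_Ktet : MeasurableSet Ktet := isClosed_Ktet.measurableSet

lemma isCompact_Ktet : IsCompact Ktet := by
  rw [Metric.isCompact_iff_isClosed_bounded]
  refine ⟨isClosed_Ktet, ?_⟩
  have : Ktet ⊆ Set.pi Set.univ fun _ : Fin 3 => Set.Icc (0:ℝ) 1 := by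
    intro x hx
    rw [mem_Ktet] at hx
    intro i _
    obtain ⟨a,b,c,d⟩ := hx
    fin_cases i <;> exact ⟨by assumption, by simpa using by linarith⟩
  exact (Bornology.IsBounded.pi (fun _ => Metric.isBounded_Icc 0 1)).subset this

lemma integrableOn_evalP (P : Mv3) : IntegrableOn (fun x => eval x P) Ktet := by
  exact (continuous_evalP P).continuousOn.integrableOn_compact isCompact_Ktet

lemma volume_Ktet_lt_top : volume Ktet < ⊤ := isCompact_Ktet.measure_lt_top

lemma openBox_subset_Ktet : (Set.pi Set.univ fun _ : Fin 3 => Set.Ioo (0:ℝ) 4⁻¹) ⊆ Ktet := by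
  intro x hx
  rw [Set.mem_univ_pi] at hx
  rw [mem_Ktet]
  have h0 := hx 0; have h1 := hx 1; have h2 := hx 2
  simp [Set.mem_Ioo] at h0 h1 h2
  refine ⟨h0.1.le, h1.1.le, h2.1.le, by linarith [h0.2, h1.2, h2.2]⟩

lemma volume_Ktet_pos : 0 < volume Ktet := by
  refine lt_of_lt_of_le ?_ (measure_mono openBox_subset_Ktet)
  rw [volume_pi_pi]
  simp [Real.volume_Ioo]
  exact ENNReal.pow_pos (by simp) 3

def Ipol : Mv3 →ₗ[ℝ] ℝ where
  toFun P := ∫ x in Ktet, eval x P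
  map_add' P Q := by
    simp only [map_add]
    exact integral_add (integrableOn_evalP P) (integrableOn_evalP Q)
  map_smul' c P := by
    simp only [MvPolynomial.smul_eval, RingHom.id_apply]
    exact integral_smul c _

lemma Ipol_apply (P : Mv3) : Ipol P = ∫ x in Ktet, eval x P := rfl

lemma Ipol_C (c : ℝ) : Ipol (C c) = c * (volume Ktet).toReal := by
  rw [Ipol_apply]
  simp [mul_comm, setIntegral_const, Measure.real]

lemma analyticOnNhd_evalP (P : Mv3) :
    AnalyticOnNhd ℝ (fun x : Fin 3 → ℝ => eval x P) Set.univ := by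
  simpa using AnalyticOnNhd.eval_continuousLinearMap
    (ContinuousLinearMap.id ℝ (Fin 3 → ℝ)) P

/-- A multivariate polynomial vanishing on a nonempty open set is zero. -/
lemma eq_zero_of_eval_zero_on_open {P : Mv3} {U : Set (Fin 3 → ℝ)} (hU : IsOpen U)
    (hne : U.Nonempty) (h : ∀ x ∈ U, eval x P = 0) : P = 0 := by
  obtain ⟨z₀, hz₀⟩ := hne
  have hz : (fun x : Fin 3 → ℝ => eval x P) =ᶠ[nhds z₀] 0 := by
    filter_upwards [hU.mem_nhds hz₀] with x hx using h x hx
  have := AnalyticOnNhd.eqOn_zero_of_preconnected_of_eventuallyEq_zero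
    (analyticOnNhd_evalP P) isPreconnected_univ (Set.mem_univ z₀) hz
  refine MvPolynomial.funext fun x => ?_
  simpa using this (Set.mem_univ x)

def Ubox : Set (Fin 3 → ℝ) := Set.pi Set.univ fun _ : Fin 3 => Set.Ioo (0:ℝ) 4⁻¹

lemma isOpen_Ubox : IsOpen Ubox := isOpen_set_pi Set.finite_univ fun _ _ => isOpen_Ioo

lemma nonempty_Ubox : Ubox.Nonempty := by
  refine ⟨fun _ => 8⁻¹, ?_⟩
  intro i _
  constructor <;> norm_num

/-- If a polynomial is nonnegative on Ktet with zero integral, it vanishes on the open box. -/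
lemma eval_zero_on_box_of_nonneg {P : Mv3} (h0 : ∀ x ∈ Ktet, 0 ≤ eval x P)
    (hI : (∫ x in Ktet, eval x P) = 0) : ∀ x ∈ Ubox, eval x P = 0 := by
  intro x₀ hx₀
  by_contra hne
  have hx₀K : x₀ ∈ Ktet := openBox_subset_Ktet hx₀
  have hpos : 0 < eval x₀ P := lt_of_le_of_ne (h0 x₀ hx₀K) (Ne.symm hne)
  -- find a small ball inside Ubox where eval ≥ eval x₀ / 2
  have hcont : ContinuousAt (fun x => eval x P) x₀ := (continuous_evalP P).continuousAt
  have hev : ∀ᶠ y in nhds x₀, eval x₀ P / 2 < eval y P := by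
    have : ContinuousAt (fun _ : Fin 3 → ℝ => eval x₀ P / 2) x₀ := continuousAt_const
    exact ContinuousAt.eventually_lt this hcont (by linarith)
  obtain ⟨V, hVsub, hVopen, hx₀V⟩ := eventually_nhds_iff.mp (hev.and (isOpen_Ubox.eventually_mem hx₀))
  obtain ⟨ε, hε, hball⟩ := Metric.isOpen_iff.mp hVopen x₀ hx₀V
  set S := Metric.ball x₀ (ε/2) ∩ V
  have hSsub : S ⊆ Ktet := fun y hy => openBox_subset_Ktet (hVsub y hy.2).2
  have hSmeas : MeasurableSet S := (Metric.isOpen_ball.inter hVopen).measurableSet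
  have hSvol : 0 < volume S := by
    refine (Metric.isOpen_ball.inter hVopen).measure_pos volume ⟨x₀, ?_, hx₀V⟩
    exact Metric.mem_ball_self (by linarith)
  have hSfin : volume S ≠ ⊤ := by
    refine ne_of_lt (lt_of_le_of_lt (measure_mono Set.inter_subset_left) ?_)
    exact Metric.isBounded_ball.measure_lt_top
  have hle : eval x₀ P / 2 * (volume S).toReal ≤ ∫ x in S, eval x P := by
    refine setIntegral_ge_of_const_le_real hSmeas hSfin (fun y hy => (hVsub y hy.2).1.le) ?_
    exact (integrableOn_evalP P).mono_set hSsub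
  have hmono : (∫ x in S, eval x P) ≤ ∫ x in Ktet, eval x P := by
    refine setIntegral_mono_set (integrableOn_evalP P) ?_ (HasSubset.Subset.eventuallyLE hSsub)
    filter_upwards [ae_restrict_mem measurableSet_Ktet] with y hy using h0 y hy
  have : 0 < (volume S).toReal := ENNReal.toReal_pos hSvol.ne' hSfin
  nlinarith [hle, hmono, hI]

lemma coeff_pderiv (i : Fin 3) (f : Mv3) (m : Fin 3 →₀ ℕ) :
    coeff m (pderiv i f) = ((m i : ℝ) + 1) * coeff (m + Finsupp.single i 1) f := by
  induction f using MvPolynomial.induction_on' with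
  | add p q hp hq => simp [hp, hq, mul_add]
  | monomial s a =>
    rw [pderiv_monomial]
    by_cases hs : s i = 0
    · have hne : s ≠ m + Finsupp.single i 1 := by
        intro h
        rw [h] at hs
        simp at hs
      simp [coeff_monomial, hs, hne]
    · have h1 : (1:ℕ) ≤ s i := Nat.one_le_iff_ne_zero.mpr hs
      rcases eq_or_ne s (m + Finsupp.single i 1) with h | h
      · subst h
        have h2 : m + Finsupp.single i 1 - Finsupp.single i 1 = m := by
          ext j; simp
        simp [coeff_monomial, h2]
        ring
      · have h2 : s - Finsupp.single i 1 ≠ m := by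
          intro hh
          apply h
          rw [← hh, tsub_add_cancel_of_le]
          exact Finsupp.single_le_iff.mpr h1
        simp [coeff_monomial, h, h2]

lemma sum_add_single (m : Fin 3 →₀ ℕ) (i : Fin 3) :
    (m + Finsupp.single i 1).sum (fun _ n => n) = m.sum (fun _ n => n) + 1 := by
  rw [Finsupp.sum_add_index' (fun _ => rfl) (fun _ _ _ => rfl), Finsupp.sum_single_index rfl]

lemma totalDegree_pderiv_le (i : Fin 3) (f : Mv3) :
    (pderiv i f).totalDegree ≤ f.totalDegree - 1 := by
  rw [totalDegree]
  refine Finset.sup_le fun m hm => ?_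
  rw [mem_support_iff, coeff_pderiv] at hm
  have h2 : coeff (m + Finsupp.single i 1) f ≠ 0 := by
    intro h; rw [h] at hm; simp at hm
  have h3 := MvPolynomial.le_totalDegree (mem_support_iff.mpr h2)
  rw [sum_add_single] at h3
  omega

lemma eq_C_of_pderiv_eq_zero {v : Mv3} (h : ∀ i, pderiv i v = 0) :
    v = C (coeff 0 v) := by
  ext m
  rcases eq_or_ne m 0 with rfl | hm
  · simp
  · rw [coeff_C, if_neg (Ne.symm hm)]
    obtain ⟨i, hi⟩ : ∃ i, m i ≠ 0 := by
      by_contra hc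
      push_neg at hc
      exact hm (Finsupp.ext hc)
    have h1 : (1:ℕ) ≤ m i := Nat.one_le_iff_ne_zero.mpr hi
    have := coeff_pderiv i v (m - Finsupp.single i 1)
    rw [h i, tsub_add_cancel_of_le (Finsupp.single_le_iff.mpr h1)] at this
    set m' : Fin 3 →₀ ℕ := m - Finsupp.single i 1 with hm'
    have hpos : ((m' i : ℕ) : ℝ) + 1 ≠ 0 := by positivity
    have := this.symm
    rw [coeff_zero] at this
    exact (mul_eq_zero.mp this).resolve_left hpos

lemma pderiv_eq_zero_of_totalDegree_eq_zero {v : Mv3} (h : v.totalDegree = 0) (i : Fin 3) :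
    pderiv i v = 0 := by
  ext m
  rw [coeff_pderiv, coeff_zero]
  have : coeff (m + Finsupp.single i 1) v = 0 := by
    refine MvPolynomial.coeff_eq_zero_of_totalDegree_lt ?_
    rw [h]
    set m' : Fin 3 →₀ ℕ := m + Finsupp.single i 1 with hm'
    have : 0 < ∑ j ∈ m'.support, m' j := by
      refine Finset.sum_pos' (fun j _ => Nat.zero_le _) ⟨i, ?_, ?_⟩
      · rw [Finsupp.mem_support_iff]; simp [hm']
      · simp [hm']
    exact this
  rw [this, mul_zero]

lemma mem_Ktet' {x : Fin 3 → ℝ} :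
    x ∈ Ktet ↔ (∀ j : Fin 3, 0 ≤ x j) ∧ ∑ j, x j ≤ 1 := by
  rw [mem_Ktet, Fin.sum_univ_three]
  constructor
  · rintro ⟨h0, h1, h2, h3⟩
    exact ⟨fun j => by fin_cases j <;> assumption, h3⟩
  · rintro ⟨h, h3⟩
    exact ⟨h 0, h 1, h 2, h3⟩

lemma insertNth_mem_Ktet {i : Fin 3} {t : ℝ} {y : Fin 2 → ℝ} :
    i.insertNth t y ∈ Ktet ↔ (0 ≤ t ∧ (∀ j, 0 ≤ y j) ∧ t + ∑ j, y j ≤ 1) := by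
  rw [mem_Ktet']
  rw [Fin.sum_univ_succAbove _ i, i.forall_iff_succAbove]
  simp [Fin.insertNth_apply_same, Fin.insertNth_apply_succAbove, and_assoc]

lemma hasDerivAt_eval_insertNth (i : Fin 3) (y : Fin 2 → ℝ) (f : Mv3) (t : ℝ) :
    HasDerivAt (fun s => eval (i.insertNth s y) f)
      (eval (i.insertNth t y) (pderiv i f)) t := by
  induction f using MvPolynomial.induction_on with
  | C a => simpa using hasDerivAt_const t a
  | add p q hp hq => simp only [map_add]; exact hp.add hq
  | mul_X p j hp =>
    rcases eq_or_ne j i with rfl | hne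
    · have := (hp.mul (hasDerivAt_id t) : HasDerivAt (fun s => eval (j.insertNth s y) p * s) _ t)
      simp only [pderiv_mul, map_mul, map_add, eval_X, pderiv_X_self, map_one,
        Fin.insertNth_apply_same]
      exact this
    · obtain ⟨j', hj'⟩ := Fin.exists_succAbove_eq hne
      subst hj'
      have hval : ∀ s : ℝ, (i.insertNth s y : Fin 3 → ℝ) (i.succAbove j') = y j' := fun s => by
        simp
      have := hp.mul_const (y j')
      simpa [pderiv_mul, pderiv_X_of_ne hne, hval, mul_comm] using this

lemma continuous_eval_insertNth (i : Fin 3) (y : Fin 2 → ℝ) (f : Mv3) :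
    Continuous fun s : ℝ => eval (i.insertNth s y) f := by
  have : Differentiable ℝ fun s : ℝ => eval (i.insertNth s y) f :=
    fun t => (hasDerivAt_eval_insertNth i y f t).differentiableAt
  exact this.continuous

lemma integral_pderiv_key (i : Fin 3) (g : Mv3)
    (hg0 : ∀ y : Fin 2 → ℝ, eval (i.insertNth 0 y) g = 0)
    (hg1 : ∀ (t : ℝ) (y : Fin 2 → ℝ), t + ∑ j, y j = 1 → eval (i.insertNth t y) g = 0) :
    (∫ x in Ktet, eval x (pderiv i g)) = 0 := by
  set F : (Fin 3 → ℝ) → ℝ := fun x => eval x (pderiv i g) with hF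
  have hFint : Integrable (Ktet.indicator F) := by
    rw [integrable_indicator_iff measurableSet_Ktet]
    exact integrableOn_evalP _
  have h1 : (∫ x in Ktet, eval x (pderiv i g)) = ∫ x, Ktet.indicator F x :=
    (integral_indicator measurableSet_Ktet).symm
  set e := (MeasurableEquiv.piFinSuccAbove (fun _ : Fin 3 => ℝ) i).symm with hedef
  have hem : MeasurePreserving e (volume : Measure (ℝ × (Fin 2 → ℝ))) volume :=
    (volume_preserving_piFinSuccAbove (fun _ : Fin 3 => ℝ) i).symm _
  have he : ∀ z : ℝ × (Fin 2 → ℝ), e z = i.insertNth z.1 z.2 := by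
    intro z
    rw [hedef, MeasurableEquiv.piFinSuccAbove_symm_apply]
    rfl
  have h2 : ∫ x, Ktet.indicator F x = ∫ z : ℝ × (Fin 2 → ℝ), Ktet.indicator F (e z) :=
    (hem.integral_comp e.measurableEmbedding _).symm
  have hint2 : Integrable (fun z : ℝ × (Fin 2 → ℝ) => Ktet.indicator F (e z)) volume :=
    (hem.integrable_comp_emb e.measurableEmbedding).mpr hFint
  have h3 : ∫ z : ℝ × (Fin 2 → ℝ), Ktet.indicator F (e z)
      = ∫ y : Fin 2 → ℝ, ∫ t : ℝ, Ktet.indicator F (e (t, y)) := by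
    rw [Measure.volume_eq_prod] at hint2 ⊢
    exact integral_prod_symm _ hint2
  have h4 : ∀ y : Fin 2 → ℝ, (∫ t : ℝ, Ktet.indicator F (e (t, y))) = 0 := by
    intro y
    have hrw : ∀ t : ℝ, Ktet.indicator F (e (t, y))
        = ({t : ℝ | i.insertNth t y ∈ Ktet}).indicator (fun t => F (i.insertNth t y)) t := by
      intro t
      rw [he]
      by_cases ht : i.insertNth t y ∈ Ktet
      · rw [Set.indicator_of_mem ht, Set.indicator_of_mem (by exact ht)]
      · rw [Set.indicator_of_notMem ht, Set.indicator_of_notMem (by exact ht)]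
    simp_rw [hrw]
    by_cases hy : ∀ j, 0 ≤ y j
    · have hset : {t : ℝ | i.insertNth t y ∈ Ktet} = Set.Icc 0 (1 - ∑ j, y j) := by
        ext t
        rw [Set.mem_setOf_eq, insertNth_mem_Ktet, Set.mem_Icc]
        constructor
        · rintro ⟨a, _, c⟩; exact ⟨a, by linarith⟩
        · rintro ⟨a, b⟩; exact ⟨a, hy, by linarith⟩
      rw [hset, integral_indicator measurableSet_Icc]
      rcases le_or_gt (0:ℝ) (1 - ∑ j, y j) with hc | hc
      · rw [integral_Icc_eq_integral_Ioc, ← intervalIntegral.integral_of_le hc]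
        have hftc := intervalIntegral.integral_eq_sub_of_hasDerivAt
          (a := (0:ℝ)) (b := 1 - ∑ j, y j)
          (f := fun t => eval (i.insertNth t y) g)
          (f' := fun t => F (i.insertNth t y))
          (fun t _ => hasDerivAt_eval_insertNth i y g t)
          ((continuous_eval_insertNth i y (pderiv i g)).intervalIntegrable _ _)
        rw [hftc]
        have e1 := hg1 (1 - ∑ j, y j) y (by ring)
        have e0 := hg0 y
        rw [e1, e0, sub_zero]
      · rw [Set.Icc_eq_empty (by linarith)]
        simp
    · push_neg at hy
      obtain ⟨j0, hj0⟩ := hy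
      have hset : {t : ℝ | i.insertNth t y ∈ Ktet} = (∅ : Set ℝ) := by
        ext t
        simp only [Set.mem_setOf_eq, insertNth_mem_Ktet, Set.mem_empty_iff_false, iff_false]
        rintro ⟨-, hall, -⟩
        exact absurd (hall j0) (not_le.mpr hj0)
      rw [hset]
      simp
  rw [h1, h2, h3]
  simp [h4]

lemma Ipol_pderiv_XiL0 (i : Fin 3) (k : Mv3) : Ipol (pderiv i (X i * L0p * k)) = 0 := by
  rw [Ipol_apply]
  refine integral_pderiv_key i _ ?_ ?_
  · intro y
    set z : Fin 3 → ℝ := i.insertNth (0:ℝ) y with hz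
    have h0 : z i = 0 := by rw [hz]; simp
    simp [h0]
  · intro t y hsum
    set z : Fin 3 → ℝ := i.insertNth t y with hz
    have h1 : ∑ j : Fin 3, z j = t + ∑ j : Fin 2, y j := by
      rw [hz, Fin.sum_univ_succAbove _ i]
      simp
    have hs3 : z 0 + z 1 + z 2 = 1 := by
      rw [Fin.sum_univ_three] at h1
      rw [h1, hsum]
    have hL : eval z L0p = 0 := by rw [eval_L0p]; linarith
    rw [map_mul, map_mul, hL]
    ring

-- submodules
def Vsub (p : ℕ) : Submodule ℝ (Fin 3 → Mv3) where
  carrier := {Φ | (∀ i, (Φ i).totalDegree ≤ p) ∧ normalVanish Φ}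
  add_mem' := by
    rintro Φ Ψ ⟨hd1, hn1⟩ ⟨hd2, hn2⟩
    refine ⟨fun i => le_trans (totalDegree_add _ _) (max_le (hd1 i) (hd2 i)), ?_⟩
    intro j q hq
    simp only [Pi.add_apply, map_add, add_mul]
    rw [Finset.sum_add_distrib, hn1 j q hq, hn2 j q hq, add_zero]
  zero_mem' := ⟨fun i => by simp, fun j q hq => by simp⟩
  smul_mem' := by
    rintro c Φ ⟨hd, hn⟩
    refine ⟨fun i => le_trans (totalDegree_smul_le c (Φ i)) (hd i), ?_⟩
    intro j q hq
    simp only [Pi.smul_apply, MvPolynomial.smul_eval, mul_assoc]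
    rw [← Finset.mul_sum, hn j q hq, mul_zero]

def Qsub (p : ℕ) : Submodule ℝ Mv3 where
  carrier := {w | w.totalDegree ≤ p - 1 ∧ Ipol w = 0}
  add_mem' := by
    rintro u w ⟨hd1, hI1⟩ ⟨hd2, hI2⟩
    exact ⟨le_trans (totalDegree_add _ _) (max_le hd1 hd2), by rw [map_add, hI1, hI2, add_zero]⟩
  zero_mem' := ⟨by simp, map_zero _⟩
  smul_mem' := by
    rintro c w ⟨hd, hI⟩
    exact ⟨le_trans (totalDegree_smul_le c w) hd, by rw [LinearMap.map_smul, hI, smul_zero]⟩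

def Esub (p : ℕ) : Submodule ℝ ((Fin 3 → Mv3) × Mv3) := (Vsub p).prod (Qsub p)

instance VsubFD (p : ℕ) : FiniteDimensional ℝ (Vsub p) := by
  refine FiniteDimensional.of_injective
    (⟨⟨fun Φ => fun i => (⟨Φ.1 i, (mem_restrictTotalDegree _ _ _).mpr (Φ.2.1 i)⟩ :
        restrictTotalDegree (Fin 3) ℝ p), fun a b => rfl⟩, fun c a => rfl⟩ :
      Vsub p →ₗ[ℝ] (Fin 3 → restrictTotalDegree (Fin 3) ℝ p)) ?_
  intro a b hab
  have : ∀ i, (a : Fin 3 → Mv3) i = (b : Fin 3 → Mv3) i := by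
    intro i
    exact congrArg Subtype.val (congrFun hab i)
  exact Subtype.ext (funext this)

instance QsubFD (p : ℕ) : FiniteDimensional ℝ (Qsub p) := by
  refine FiniteDimensional.of_injective
    (⟨⟨fun w => (⟨w.1, (mem_restrictTotalDegree _ _ _).mpr w.2.1⟩ :
        restrictTotalDegree (Fin 3) ℝ (p-1)), fun a b => rfl⟩, fun c a => rfl⟩ :
      Qsub p →ₗ[ℝ] restrictTotalDegree (Fin 3) ℝ (p-1)) ?_
  intro a b hab
  have h2 := congrArg Subtype.val hab
  exact Subtype.ext h2


instance EsubFD (p : ℕ) : FiniteDimensional ℝ (Esub p) := by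
  refine FiniteDimensional.of_injective
    (⟨⟨fun e => ((⟨e.1.1, (Submodule.mem_prod.mp e.2).1⟩ : Vsub p),
        (⟨e.1.2, (Submodule.mem_prod.mp e.2).2⟩ : Qsub p)), fun a b => rfl⟩,
        fun c a => rfl⟩ :
      Esub p →ₗ[ℝ] (Vsub p) × (Qsub p)) ?_
  intro a b hab
  refine Subtype.ext (Prod.ext ?_ ?_)
  · exact congrArg Subtype.val (congrArg Prod.fst hab)
  · exact congrArg Subtype.val (congrArg Prod.snd hab)

-- bilinear form
def dotP (Φ Ψ : Fin 3 → Mv3) : Mv3 := ∑ k, Φ k * Ψ k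

lemma divP_add (Φ Ψ : Fin 3 → Mv3) : divP (Φ + Ψ) = divP Φ + divP Ψ := by
  simp [divP, Finset.sum_add_distrib]

lemma divP_smul (c : ℝ) (Φ : Fin 3 → Mv3) : divP (c • Φ) = c • divP Φ := by
  simp [divP, Finset.smul_sum]

lemma dotP_add_left (Φ Φ' Ψ : Fin 3 → Mv3) :
    dotP (Φ + Φ') Ψ = dotP Φ Ψ + dotP Φ' Ψ := by
  simp [dotP, add_mul, Finset.sum_add_distrib]

lemma dotP_add_right (Φ Ψ Ψ' : Fin 3 → Mv3) :
    dotP Φ (Ψ + Ψ') = dotP Φ Ψ + dotP Φ Ψ' := by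
  simp [dotP, mul_add, Finset.sum_add_distrib]

lemma dotP_smul_left (c : ℝ) (Φ Ψ : Fin 3 → Mv3) : dotP (c • Φ) Ψ = c • dotP Φ Ψ := by
  simp [dotP, Finset.smul_sum, smul_mul_assoc]

lemma dotP_smul_right (c : ℝ) (Φ Ψ : Fin 3 → Mv3) : dotP Φ (c • Ψ) = c • dotP Φ Ψ := by
  simp [dotP, Finset.smul_sum, mul_smul_comm]

lemma dotP_zero_left (Ψ : Fin 3 → Mv3) : dotP 0 Ψ = 0 := by simp [dotP]
lemma dotP_zero_right (Φ : Fin 3 → Mv3) : dotP Φ 0 = 0 := by simp [dotP]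
lemma divP_zero : divP 0 = 0 := by simp [divP]

def aform : ((Fin 3 → Mv3) × Mv3) →ₗ[ℝ] ((Fin 3 → Mv3) × Mv3) →ₗ[ℝ] ℝ :=
  LinearMap.mk₂ ℝ
    (fun x y => Ipol (dotP x.1 y.1) + Ipol (x.2 * divP y.1) + Ipol (y.2 * divP x.1))
    (by
      intro x x' y
      simp only [Prod.fst_add, Prod.snd_add, dotP_add_left, divP_add, add_mul, mul_add,
        map_add]
      ring)
    (by
      intro c x y
      simp only [Prod.smul_fst, Prod.smul_snd, dotP_smul_left, divP_smul, smul_mul_assoc,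
        mul_smul_comm, LinearMap.map_smul, smul_eq_mul]
      ring)
    (by
      intro x y y'
      simp only [Prod.fst_add, Prod.snd_add, dotP_add_right, divP_add, add_mul, mul_add,
        map_add]
      ring)
    (by
      intro c x y
      simp only [Prod.smul_fst, Prod.smul_snd, dotP_smul_right, divP_smul, smul_mul_assoc,
        mul_smul_comm, LinearMap.map_smul, smul_eq_mul]
      ring)

lemma aform_apply (x y : (Fin 3 → Mv3) × Mv3) :
    aform x y = Ipol (dotP x.1 y.1) + Ipol (x.2 * divP y.1) + Ipol (y.2 * divP x.1) := rfl

def Ba (p : ℕ) : LinearMap.BilinForm ℝ (Esub p) :=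
  LinearMap.compl₁₂ aform (Esub p).subtype (Esub p).subtype

lemma Ba_apply (p : ℕ) (X Y : Esub p) : Ba p X Y = aform X.val Y.val := rfl

def tf (i : Fin 3) (h : Mv3) : Fin 3 → Mv3 := fun j => if j = i then X i * L0p * h else 0

lemma divP_tf (i : Fin 3) (h : Mv3) : divP (tf i h) = pderiv i (X i * L0p * h) := by
  rw [divP, Finset.sum_eq_single i (fun b _ hb => by simp [tf, hb]) (by simp)]
  simp [tf]

lemma totalDegree_L0p : L0p.totalDegree ≤ 1 := by
  have hX : ∀ j : Fin 3, (X j : Mv3).totalDegree ≤ 1 := fun j => by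
    rw [totalDegree_X]
  have h1 : (1 : Mv3).totalDegree ≤ 1 := by simp
  calc L0p.totalDegree = (1 - X 0 - X 1 - X 2 : Mv3).totalDegree := rfl
    _ ≤ _ := le_trans (totalDegree_sub _ _) (max_le (le_trans (totalDegree_sub _ _)
        (max_le (le_trans (totalDegree_sub _ _) (max_le h1 (hX 0))) (hX 1))) (hX 2))

lemma mem_faceK {j : Fin 4} {q : Fin 3 → ℝ} (hq : q ∈ faceK j) :
    q ∈ Ktet ∧ lam j q = 0 := hq

lemma tf_mem_V (p : ℕ) (hp2 : 2 ≤ p) (i : Fin 3) (h : Mv3) (hdeg : h.totalDegree ≤ p - 2) :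
    tf i h ∈ Vsub p := by
  constructor
  · intro j
    by_cases hj : j = i
    · rw [tf]
      simp only [hj, if_pos rfl]
      refine le_trans (totalDegree_mul _ _) ?_
      have h1 : (X i * L0p : Mv3).totalDegree ≤ 2 := by
        refine le_trans (totalDegree_mul _ _) ?_
        have := totalDegree_L0p
        rw [totalDegree_X]
        omega
      omega
    · rw [tf]
      simp [hj]
  · intro j q hq
    obtain ⟨hqK, hql⟩ := mem_faceK hq
    have hsum : ∑ k, eval q (tf i h k) * normalK j k
        = eval q (tf i h i) * normalK j i :=
      Finset.sum_eq_single (f := fun k => eval q (tf i h k) * normalK j k) i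
        (fun b _ hb => by simp [tf, hb]) (by simp)
    rw [hsum, show tf i h i = X i * L0p * h from if_pos rfl]
    have hqK' := mem_Ktet.mp hqK
    fin_cases j
    · -- face 0 : eval L0p = 0
      have hql' : lam 0 q = 0 := hql
      have h8 : lam 0 q = 1 - q 0 - q 1 - q 2 := by simp [lam]
      have hL : eval q L0p = 0 := by rw [eval_L0p, ← h8, hql']
      show eval q (X i * L0p * h) * normalK 0 i = 0
      rw [map_mul, map_mul, hL]
      ring
    · have hql' : lam 1 q = 0 := hql
      have h8 : lam 1 q = q 0 := by simp [lam]
      rw [h8] at hql'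
      show eval q (X i * L0p * h) * normalK 1 i = 0
      fin_cases i
      · have hXq : eval q (X (0 : Fin 3)) = 0 := by rw [eval_X, hql']
        show eval q (X (0:Fin 3) * L0p * h) * normalK 1 0 = 0
        rw [map_mul, map_mul, hXq]
        ring
      · show eval q (X (1:Fin 3) * L0p * h) * normalK 1 1 = 0
        have h9 : normalK 1 1 = 0 := rfl
        rw [h9, mul_zero]
      · show eval q (X (2:Fin 3) * L0p * h) * normalK 1 2 = 0
        have h9 : normalK 1 2 = 0 := rfl
        rw [h9, mul_zero]
    · have hql' : lam 2 q = 0 := hql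
      have h8 : lam 2 q = q 1 := by simp [lam]
      rw [h8] at hql'
      show eval q (X i * L0p * h) * normalK 2 i = 0
      fin_cases i
      · show eval q (X (0:Fin 3) * L0p * h) * normalK 2 0 = 0
        have h9 : normalK 2 0 = 0 := rfl
        rw [h9, mul_zero]
      · have hXq : eval q (X (1 : Fin 3)) = 0 := by rw [eval_X, hql']
        show eval q (X (1:Fin 3) * L0p * h) * normalK 2 1 = 0
        rw [map_mul, map_mul, hXq]
        ring
      · show eval q (X (2:Fin 3) * L0p * h) * normalK 2 2 = 0
        have h9 : normalK 2 2 = 0 := rfl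
        rw [h9, mul_zero]
    · have hql' : lam 3 q = 0 := hql
      have h8 : lam 3 q = q 2 := by simp [lam]
      rw [h8] at hql'
      show eval q (X i * L0p * h) * normalK 3 i = 0
      fin_cases i
      · show eval q (X (0:Fin 3) * L0p * h) * normalK 3 0 = 0
        have h9 : normalK 3 0 = 0 := rfl
        rw [h9, mul_zero]
      · show eval q (X (1:Fin 3) * L0p * h) * normalK 3 1 = 0
        have h9 : normalK 3 1 = 0 := rfl
        rw [h9, mul_zero]
      · have hXq : eval q (X (2 : Fin 3)) = 0 := by rw [eval_X, hql']
        show eval q (X (2:Fin 3) * L0p * h) * normalK 3 2 = 0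
        rw [map_mul, map_mul, hXq]
        ring

theorem Ba_nondeg (p : ℕ) (hp : 1 ≤ p) : (Ba p).Nondegenerate := by
  refine LinearMap.BilinForm.Nondegenerate.ofSeparatingLeft ?_
  intro x hx
  obtain ⟨⟨Φ, v⟩, hmem⟩ := x
  obtain ⟨hΦ, hv⟩ := Submodule.mem_prod.mp hmem
  have hvdeg : v.totalDegree ≤ p - 1 := hv.1
  have hvint : Ipol v = 0 := hv.2
  -- step A
  have hy1 : ((0, v) : (Fin 3 → Mv3) × Mv3) ∈ Esub p :=
    Submodule.mem_prod.mpr ⟨(Vsub p).zero_mem, hv⟩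
  have hA : Ipol (dotP Φ 0) + Ipol (v * divP 0) + Ipol (v * divP Φ) = 0 := hx ⟨(0, v), hy1⟩
  rw [dotP_zero_right, divP_zero, mul_zero, map_zero, zero_add, zero_add] at hA
  -- step B
  have hB : Ipol (dotP Φ Φ) + Ipol (v * divP Φ) + Ipol (v * divP Φ) = 0 := hx ⟨(Φ, v), hmem⟩
  have hB' : Ipol (dotP Φ Φ) = 0 := by linarith
  -- step C
  have hnn : ∀ x ∈ Ktet, 0 ≤ eval x (dotP Φ Φ) := by
    intro x _
    rw [dotP, map_sum]
    refine Finset.sum_nonneg fun k _ => ?_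
    rw [map_mul]
    exact mul_self_nonneg _
  have hzero := eval_zero_on_box_of_nonneg hnn (by rw [← Ipol_apply]; exact hB')
  have hΦ0 : Φ = 0 := by
    funext k
    show Φ k = 0
    refine eq_zero_of_eval_zero_on_open isOpen_Ubox nonempty_Ubox fun x hxU => ?_
    have h1 := hzero x hxU
    rw [dotP, map_sum] at h1
    have hsq : ∀ k' ∈ Finset.univ, 0 ≤ eval x (Φ k' * Φ k') := fun k' _ => by
      rw [map_mul]; exact mul_self_nonneg _
    have h2 := (Finset.sum_eq_zero_iff_of_nonneg hsq).mp h1 k (Finset.mem_univ k)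
    rw [map_mul] at h2
    exact mul_self_eq_zero.mp h2
  -- step D
  have hD : ∀ Ψ ∈ Vsub p, Ipol (v * divP Ψ) = 0 := by
    intro Ψ hΨ
    have h3 : Ipol (dotP Φ Ψ) + Ipol (v * divP Ψ) + Ipol ((0:Mv3) * divP Φ) = 0 :=
      hx ⟨(Ψ, 0), Submodule.mem_prod.mpr ⟨hΨ, (Qsub p).zero_mem⟩⟩
    rw [hΦ0, dotP_zero_left, map_zero, zero_mul, map_zero, zero_add, add_zero] at h3
    exact h3
  -- step E
  have hE : ∀ i, pderiv i v = 0 := by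
    intro i
    by_cases hzero : pderiv i v = 0
    · exact hzero
    exfalso
    have hdv1 : 1 ≤ v.totalDegree := by
      by_contra hlt
      push_neg at hlt
      exact hzero (pderiv_eq_zero_of_totalDegree_eq_zero (Nat.lt_one_iff.mp hlt) i)
    have hp2 : 2 ≤ p := by omega
    have hdh : (pderiv i v).totalDegree ≤ p - 2 := by
      have := totalDegree_pderiv_le i v
      omega
    have hI1 := hD _ (tf_mem_V p hp2 i (pderiv i v) hdh)
    rw [divP_tf] at hI1
    have hleib : pderiv i (X i * L0p * pderiv i v * v)
        = pderiv i (X i * L0p * pderiv i v) * v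
          + (X i * L0p * pderiv i v) * pderiv i v := pderiv_mul
    have hI2 : Ipol (pderiv i (X i * L0p * (pderiv i v * v))) = 0 :=
      Ipol_pderiv_XiL0 i (pderiv i v * v)
    rw [show X i * L0p * (pderiv i v * v) = X i * L0p * pderiv i v * v by ring,
      hleib, map_add] at hI2
    have hI3 : Ipol (X i * L0p * (pderiv i v * pderiv i v)) = 0 := by
      have hr : X i * L0p * pderiv i v * pderiv i v
          = X i * L0p * (pderiv i v * pderiv i v) := by ring
      have hcm : Ipol (pderiv i (X i * L0p * pderiv i v) * v)
          = Ipol (v * pderiv i (X i * L0p * pderiv i v)) := by rw [mul_comm]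
      rw [← hr]
      rw [hcm, hI1, zero_add] at hI2
      exact hI2
    have hnn2 : ∀ x ∈ Ktet, 0 ≤ eval x (X i * L0p * (pderiv i v * pderiv i v)) := by
      intro x hxK
      rw [map_mul, map_mul, map_mul, eval_X, eval_L0p]
      rw [mem_Ktet] at hxK
      have h1 : 0 ≤ x i := by fin_cases i <;> tauto
      have h2 : 0 ≤ 1 - x 0 - x 1 - x 2 := by
        obtain ⟨a, b, c, d⟩ := hxK
        linarith
      exact mul_nonneg (mul_nonneg h1 h2) (mul_self_nonneg _)
    have hz2 := eval_zero_on_box_of_nonneg hnn2 (by rw [← Ipol_apply]; exact hI3)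
    have hpoly : X i * L0p * (pderiv i v * pderiv i v) = 0 :=
      eq_zero_of_eval_zero_on_open isOpen_Ubox nonempty_Ubox hz2
    have hL0ne : L0p ≠ 0 := by
      intro hc
      have h5 := eval_L0p (fun _ => 0)
      rw [hc] at h5
      simp at h5
    rcases mul_eq_zero.mp hpoly with hc | hc
    · rcases mul_eq_zero.mp hc with hc' | hc'
      · exact X_ne_zero i hc'
      · exact hL0ne hc'
    · exact hzero (mul_self_eq_zero.mp hc)
  -- step F
  have hvC := eq_C_of_pderiv_eq_zero hE
  have hc0 : coeff 0 v = 0 := by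
    have h6 : Ipol v = 0 := hvint
    rw [hvC, Ipol_C] at h6
    have hvol : (volume Ktet).toReal ≠ 0 :=
      ne_of_gt (ENNReal.toReal_pos volume_Ktet_pos.ne' volume_Ktet_lt_top.ne)
    exact (mul_eq_zero.mp h6).resolve_right hvol
  have hv0 : v = 0 := by rw [hvC, hc0, map_zero]
  exact Subtype.ext (by rw [Prod.mk.injEq] at *; exact ⟨hΦ0, hv0⟩)

def lfun (B : Fin 3 → Mv3) : ((Fin 3 → Mv3) × Mv3) →ₗ[ℝ] ℝ where
  toFun y := - Ipol (y.2 * divP B)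
  map_add' y z := by
    simp only [Prod.snd_add, add_mul, map_add]
    ring
  map_smul' c y := by
    simp only [Prod.smul_snd, smul_mul_assoc, LinearMap.map_smul, smul_eq_mul,
      RingHom.id_apply]
    ring

lemma lfun_apply (B : Fin 3 → Mv3) (y : (Fin 3 → Mv3) × Mv3) :
    lfun B y = - Ipol (y.2 * divP B) := rfl

lemma int_mul (w d : Mv3) : (∫ x in Ktet, eval x w * eval x d) = Ipol (w * d) := by
  rw [Ipol_apply]
  have h : (fun x : Fin 3 → ℝ => eval x w * eval x d) = fun x => eval x (w * d) := by
    funext x; rw [map_mul]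
  rw [h]

lemma int_dot (Φ Ψ : Fin 3 → Mv3) :
    (∫ x in Ktet, ∑ k, eval x (Φ k) * eval x (Ψ k)) = Ipol (dotP Φ Ψ) := by
  rw [Ipol_apply]
  have h : (fun x : Fin 3 → ℝ => ∑ k, eval x (Φ k) * eval x (Ψ k))
      = fun x => eval x (dotP Φ Ψ) := by
    funext x
    rw [dotP, map_sum]
    exact Finset.sum_congr rfl fun k _ => (map_mul _ _ _).symm
  rw [h]

lemma cond_iff (p : ℕ) (B : Fin 3 → Mv3) (Φv : (Fin 3 → Mv3) × Mv3) :
    ((∀ i, (Φv.1 i).totalDegree ≤ p) ∧ normalVanish Φv.1 ∧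
      Φv.2.totalDegree ≤ p - 1 ∧ (∫ x in Ktet, MvPolynomial.eval x Φv.2) = 0 ∧
      (∀ w : MvPolynomial (Fin 3) ℝ, w.totalDegree ≤ p - 1 →
        (∫ x in Ktet, MvPolynomial.eval x w) = 0 →
        (∫ x in Ktet, MvPolynomial.eval x w * MvPolynomial.eval x (divP Φv.1))
          + ∫ x in Ktet, MvPolynomial.eval x w * MvPolynomial.eval x (divP B) = 0) ∧
      (∀ Ψ : Fin 3 → MvPolynomial (Fin 3) ℝ, (∀ i, (Ψ i).totalDegree ≤ p) →
        normalVanish Ψ →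
        (∫ x in Ktet, ∑ i, MvPolynomial.eval x (Φv.1 i) * MvPolynomial.eval x (Ψ i))
          + ∫ x in Ktet, MvPolynomial.eval x Φv.2 * MvPolynomial.eval x (divP Ψ) = 0))
    ↔ (Φv ∈ Esub p ∧ ∀ z ∈ Esub p, aform Φv z = lfun B z) := by
  constructor
  · rintro ⟨c1, c2, c3, c4, c5, c6⟩
    have hmem : Φv ∈ Esub p := Submodule.mem_prod.mpr
      ⟨⟨c1, c2⟩, ⟨c3, by rw [Ipol_apply]; exact c4⟩⟩
    refine ⟨hmem, ?_⟩
    rintro ⟨Ψ, w⟩ hz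
    obtain ⟨hΨ, hw⟩ := Submodule.mem_prod.mp hz
    have e6 := c6 Ψ hΨ.1 hΨ.2
    rw [int_dot, int_mul] at e6
    have e5 := c5 w hw.1 (by rw [← Ipol_apply]; exact hw.2)
    rw [int_mul, int_mul] at e5
    rw [aform_apply, lfun_apply]
    show Ipol (dotP Φv.1 Ψ) + Ipol (Φv.2 * divP Ψ) + Ipol (w * divP Φv.1)
      = - Ipol (w * divP B)
    linarith
  · rintro ⟨hmem, heq⟩
    obtain ⟨hV, hQ⟩ := Submodule.mem_prod.mp hmem
    refine ⟨hV.1, hV.2, hQ.1, by rw [← Ipol_apply]; exact hQ.2, ?_, ?_⟩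
    · intro w hwd hwi
      have hz : ((0, w) : (Fin 3 → Mv3) × Mv3) ∈ Esub p := Submodule.mem_prod.mpr
        ⟨(Vsub p).zero_mem, ⟨hwd, by rw [Ipol_apply]; exact hwi⟩⟩
      have h9 := heq _ hz
      rw [aform_apply, lfun_apply] at h9
      rw [dotP_zero_right, divP_zero, mul_zero, map_zero, zero_add, zero_add] at h9
      rw [int_mul, int_mul]
      linarith
    · intro Ψ hΨd hΨn
      have hz : ((Ψ, 0) : (Fin 3 → Mv3) × Mv3) ∈ Esub p := Submodule.mem_prod.mpr
        ⟨⟨hΨd, hΨn⟩, (Qsub p).zero_mem⟩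
      have h9 := heq _ hz
      rw [aform_apply, lfun_apply] at h9
      simp only [zero_mul, map_zero, add_zero, neg_zero] at h9
      rw [int_dot, int_mul]
      linarith


/-- unique solvability of the local mixed system: for every B ∈ (P_p)³ there
is a unique (Φ, v) ∈ V × Q with ∫ w div Φ + ∫ w div B = 0 ∀ w ∈ Q and
∫ Φ·Ψ + ∫ v div Ψ = 0 ∀ Ψ ∈ V. -/
theorem mixed_system_unique_solution (p : ℕ) (hp : 1 ≤ p)
    (B : Fin 3 → MvPolynomial (Fin 3) ℝ) (hB : ∀ i, (B i).totalDegree ≤ p) :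
    ∃! Φv : (Fin 3 → MvPolynomial (Fin 3) ℝ) × MvPolynomial (Fin 3) ℝ,
      (∀ i, (Φv.1 i).totalDegree ≤ p) ∧ normalVanish Φv.1 ∧
      Φv.2.totalDegree ≤ p - 1 ∧ (∫ x in Ktet, MvPolynomial.eval x Φv.2) = 0 ∧
      (∀ w : MvPolynomial (Fin 3) ℝ, w.totalDegree ≤ p - 1 →
        (∫ x in Ktet, MvPolynomial.eval x w) = 0 →
        (∫ x in Ktet, MvPolynomial.eval x w * MvPolynomial.eval x (divP Φv.1))
          + ∫ x in Ktet, MvPolynomial.eval x w * MvPolynomial.eval x (divP B) = 0) ∧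
      (∀ Ψ : Fin 3 → MvPolynomial (Fin 3) ℝ, (∀ i, (Ψ i).totalDegree ≤ p) →
        normalVanish Ψ →
        (∫ x in Ktet, ∑ i, MvPolynomial.eval x (Φv.1 i) * MvPolynomial.eval x (Ψ i))
          + ∫ x in Ktet, MvPolynomial.eval x Φv.2 * MvPolynomial.eval x (divP Ψ) = 0) := by

  have hnd := Ba_nondeg p hp
  set lE : Module.Dual ℝ (Esub p) := (lfun B) ∘ₗ (Esub p).subtype with hlE
  set x₀ : Esub p := ((Ba p).toDual hnd).symm lE with hx₀
  refine ⟨x₀.val, (cond_iff p B x₀.val).mpr ⟨x₀.2, fun z hz => ?_⟩, fun y hy => ?_⟩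
  · have h10 := LinearMap.BilinForm.apply_toDual_symm_apply (B := Ba p) (hB := hnd) lE ⟨z, hz⟩
    rw [← hx₀] at h10
    rw [Ba_apply, hlE, LinearMap.comp_apply, Submodule.subtype_apply] at h10
    exact h10
  · obtain ⟨hymem, hyeq⟩ := (cond_iff p B y).mp hy
    have hYd : (Ba p).toDual hnd ⟨y, hymem⟩ = lE := by
      apply LinearMap.ext
      intro z
      rw [show ((Ba p).toDual hnd ⟨y, hymem⟩) z = Ba p ⟨y, hymem⟩ z from rfl]
      rw [Ba_apply, hlE, LinearMap.comp_apply, Submodule.subtype_apply]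
      exact hyeq z.val z.2
    have hx₀d : (Ba p).toDual hnd x₀ = lE := by
      rw [hx₀]
      exact LinearEquiv.apply_symm_apply _ _
    have h11 : (⟨y, hymem⟩ : Esub p) = x₀ := by
      apply ((Ba p).toDual hnd).injective
      rw [hYd, hx₀d]
    exact congrArg Subtype.val h11
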